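/- Let n ≥ 1 be an integer, D > 0, set c := −(n+1)·(n·D)^{1/(n+1)} and ρ₀ := (n·D)^{1/(2n+2)}, and define h(x) := x² + D·x^{−2n} + c/n on (0,∞). Then for every a > ρ₀ the function x ↦ 1/√(h(x)) is not integrable on (ρ₀, a), i.e. the improper integral ∫_{ρ₀}^{a} h(x)^{−1/2} dx diverges. -/

import Mathlib

open MeasureTheory Set

lemma aux_pow_sub_pow_le {x y : ℝ} (hy : 0 ≤ y) (hxy : y ≤ x) (m : ℕ) :
    x ^ m - y ^ m ≤ (m : ℝ) * x ^ (m - 1) * (x - y) := by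
  have hx : 0 ≤ x := hy.trans hxy
  rw [← geom_sum₂_mul]
  have hsum : (∑ i ∈ Finset.range m, x ^ i * y ^ (m - 1 - i)) ≤ (m : ℝ) * x ^ (m - 1) := by
    calc (∑ i ∈ Finset.range m, x ^ i * y ^ (m - 1 - i))
        ≤ ∑ i ∈ Finset.range m, x ^ (m - 1) := by
          apply Finset.sum_le_sum
          intro i hi
          have hi' : i < m := Finset.mem_range.mp hi
          calc x ^ i * y ^ (m - 1 - i) ≤ x ^ i * x ^ (m - 1 - i) := by
                exact mul_le_mul_of_nonneg_left (pow_le_pow_left₀ hy hxy _) (pow_nonneg hx _)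
            _ = x ^ (i + (m - 1 - i)) := (pow_add x i _).symm
            _ = x ^ (m - 1) := by congr 1; omega
      _ = (m : ℝ) * x ^ (m - 1) := by simp [Finset.sum_const, mul_comm]
  exact mul_le_mul_of_nonneg_right hsum (sub_nonneg.mpr hxy)

theorem stmt_15 (n : ℕ) (hn : 1 ≤ n) (D : ℝ) (hD : 0 < D)
    (c : ℝ) (hc : c = -(((n : ℝ) + 1) * ((n : ℝ) * D) ^ ((1 : ℝ) / ((n : ℝ) + 1))))
    (ρ₀ : ℝ) (hρ₀ : ρ₀ = ((n : ℝ) * D) ^ ((1 : ℝ) / (2 * (n : ℝ) + 2)))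
    (h : ℝ → ℝ) (hh : ∀ x : ℝ, h x = x ^ 2 + D * x ^ (-(2 * n : ℤ)) + c / (n : ℝ)) :
    ∀ a : ℝ, ρ₀ < a →
      ¬ MeasureTheory.IntegrableOn (fun x => 1 / Real.sqrt (h x)) (Set.Ioo ρ₀ a) := by
  intro a ha hint
  have hn0 : (0 : ℝ) < n := by exact_mod_cast Nat.pos_of_ne_zero (by omega)
  have hnD : (0 : ℝ) < n * D := mul_pos hn0 hD
  have hρpos : 0 < ρ₀ := hρ₀ ▸ Real.rpow_pos_of_pos hnD _
  have h2n2 : (2 * (n : ℝ) + 2) ≠ 0 := by positivity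
  -- ρ₀ ^ (2n+2) = n * D
  have hpow : ρ₀ ^ (2 * n + 2) = n * D := by
    rw [hρ₀, ← Real.rpow_natCast (((n : ℝ) * D) ^ ((1 : ℝ) / (2 * (n : ℝ) + 2))),
      ← Real.rpow_mul hnD.le]
    rw [show ((2 * n + 2 : ℕ) : ℝ) = 2 * (n : ℝ) + 2 by push_cast; ring]
    rw [one_div_mul_cancel h2n2, Real.rpow_one]
  -- ρ₀ ^ 2 = (n D) ^ (1/(n+1))
  have hsq : ρ₀ ^ 2 = ((n : ℝ) * D) ^ ((1 : ℝ) / ((n : ℝ) + 1)) := by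
    rw [hρ₀, ← Real.rpow_natCast (((n : ℝ) * D) ^ ((1 : ℝ) / (2 * (n : ℝ) + 2))),
      ← Real.rpow_mul hnD.le]
    congr 1
    push_cast
    field_simp
  have hcn : c / (n : ℝ) = -(((n : ℝ) + 1) / n) * ρ₀ ^ 2 := by
    rw [hc, ← hsq]; field_simp
  -- h ρ₀ = 0
  have hzero : h ρ₀ = 0 := by
    rw [hh, hcn]
    have hz : (ρ₀ : ℝ) ^ (-(2 * n : ℤ)) = (ρ₀ ^ (2 * n))⁻¹ := by
      rw [show (-(2 * (n : ℤ))) = -((2 * n : ℕ) : ℤ) by push_cast; ring,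
        zpow_neg, zpow_natCast]
    rw [hz]
    have hD' : D = ρ₀ ^ (2 * n + 2) / n := by field_simp [hpow]; rw [hpow]; ring
    rw [hD']
    have hρ2n : (0:ℝ) < ρ₀ ^ (2 * n) := pow_pos hρpos _
    field_simp
    ring
  -- derivative
  have hderiv : ∀ x : ℝ, 0 < x →
      HasDerivAt h (2 * (x ^ (2 * n + 2) - ρ₀ ^ (2 * n + 2)) / x ^ (2 * n + 1)) x := by
    intro x hx
    have h1 : HasDerivAt (fun y : ℝ => y ^ 2) (2 * x) x := by
      simpa using hasDerivAt_pow 2 x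
    have h2 := hasDerivAt_zpow (-(2 * n : ℤ)) x (Or.inl hx.ne')
    have h3 := h1.add ((h2.const_mul D).add_const (c / n))
    have h4 : HasDerivAt h
        (2 * x + D * ((↑(-(2 * n : ℤ)) : ℝ) * x ^ (-(2 * n : ℤ) - 1))) x := by
      refine h3.congr_of_eventuallyEq ?_
      filter_upwards with y using by rw [hh y]; simp only [Pi.add_apply]; ring
    convert h4 using 1
    have hxz : x ^ (-(2 * n : ℤ) - 1) = (x ^ (2 * n + 1))⁻¹ := by
      rw [show (-(2 * (n : ℤ)) - 1) = -((2 * n + 1 : ℕ) : ℤ) by push_cast; ring,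
        zpow_neg, zpow_natCast]
    rw [hxz, hpow]
    have hx1 : (x : ℝ) ^ (2 * n + 1) ≠ 0 := pow_ne_zero _ hx.ne'
    have hxsplit : x ^ (2 * n + 2) = x ^ (2 * n + 1) * x := by ring
    push_cast
    field_simp
    ring
  -- key bounds on h on (ρ₀, a)
  have hKey : ∀ x ∈ Set.Ioo ρ₀ a, 0 < h x ∧ h x ≤ (4 * (n : ℝ) + 4) * (x - ρ₀) ^ 2 := by
    intro x hx
    obtain ⟨hx1, hx2⟩ := hx
    have hxpos : 0 < x := hρpos.trans hx1
    have hcont : ContinuousOn h (Set.Icc ρ₀ x) := by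
      intro y hy
      have hy0 : 0 < y := lt_of_lt_of_le hρpos hy.1
      exact ((hderiv y hy0).continuousAt).continuousWithinAt
    obtain ⟨ξ, hξ, hslope⟩ := exists_hasDerivAt_eq_slope h
      (fun y => 2 * (y ^ (2 * n + 2) - ρ₀ ^ (2 * n + 2)) / y ^ (2 * n + 1)) hx1 hcont
      (fun y hy => hderiv y (hρpos.trans hy.1))
    have hξpos : 0 < ξ := hρpos.trans hξ.1
    have hξpow : 0 < ξ ^ (2 * n + 1) := pow_pos hξpos _
    have hxr : 0 < x - ρ₀ := sub_pos.mpr hx1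
    have hhx : h x = 2 * (ξ ^ (2 * n + 2) - ρ₀ ^ (2 * n + 2)) / ξ ^ (2 * n + 1) * (x - ρ₀) := by
      rw [hslope, hzero, sub_zero, div_mul_cancel₀ _ hxr.ne']
    have hsub : 0 < ξ ^ (2 * n + 2) - ρ₀ ^ (2 * n + 2) := by
      have := pow_lt_pow_left₀ hξ.1 hρpos.le (n := 2 * n + 2) (by omega)
      linarith
    constructor
    · rw [hhx]
      exact mul_pos (div_pos (by linarith) hξpow) hxr
    · rw [hhx]
      have hb := aux_pow_sub_pow_le hρpos.le hξ.1.le (2 * n + 2)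
      rw [show (2 * n + 2) - 1 = 2 * n + 1 by omega] at hb
      have hslope_le : 2 * (ξ ^ (2 * n + 2) - ρ₀ ^ (2 * n + 2)) / ξ ^ (2 * n + 1)
          ≤ (4 * (n : ℝ) + 4) * (x - ρ₀) := by
        rw [div_le_iff₀ hξpow]
        have hξx : ξ - ρ₀ ≤ x - ρ₀ := by have := hξ.2; linarith
        calc 2 * (ξ ^ (2 * n + 2) - ρ₀ ^ (2 * n + 2))
            ≤ 2 * (((2 * n + 2 : ℕ) : ℝ) * ξ ^ (2 * n + 1) * (ξ - ρ₀)) := by linarith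
          _ = (4 * (n : ℝ) + 4) * (ξ - ρ₀) * ξ ^ (2 * n + 1) := by push_cast; ring
          _ ≤ (4 * (n : ℝ) + 4) * (x - ρ₀) * ξ ^ (2 * n + 1) := by
              apply mul_le_mul_of_nonneg_right ?_ hξpow.le
              apply mul_le_mul_of_nonneg_left hξx (by positivity)
      calc 2 * (ξ ^ (2 * n + 2) - ρ₀ ^ (2 * n + 2)) / ξ ^ (2 * n + 1) * (x - ρ₀)
          ≤ (4 * (n : ℝ) + 4) * (x - ρ₀) * (x - ρ₀) :=
            mul_le_mul_of_nonneg_right hslope_le hxr.le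
        _ = (4 * (n : ℝ) + 4) * (x - ρ₀) ^ 2 := by ring
  -- comparison with (x - ρ₀)⁻¹
  set K : ℝ := Real.sqrt (4 * (n : ℝ) + 4) with hK
  have hKpos : 0 < K := Real.sqrt_pos.mpr (by positivity)
  have hg : IntegrableOn (fun x => (x - ρ₀)⁻¹) (Set.Ioo ρ₀ a) := by
    refine Integrable.mono' (hint.const_mul K) ?_ ?_
    · exact ((measurable_id.sub_const ρ₀).inv).aestronglyMeasurable
    · rw [ae_restrict_iff' measurableSet_Ioo]
      filter_upwards with x hx
      obtain ⟨hpos, hle⟩ := hKey x hx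
      have hxr : 0 < x - ρ₀ := sub_pos.mpr hx.1
      rw [Real.norm_eq_abs, abs_of_pos (inv_pos.mpr hxr)]
      have hsqle : Real.sqrt (h x) ≤ K * (x - ρ₀) := by
        have : K * (x - ρ₀) = Real.sqrt ((4 * (n : ℝ) + 4) * (x - ρ₀) ^ 2) := by
          rw [Real.sqrt_mul (by positivity), Real.sqrt_sq hxr.le]
        rw [this]
        exact Real.sqrt_le_sqrt hle
      have hs : 0 < Real.sqrt (h x) := Real.sqrt_pos.mpr hpos
      rw [mul_one_div, inv_eq_one_div, div_le_div_iff₀ hxr hs, one_mul]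
      linarith
  have hii : IntervalIntegrable (fun x => (x - ρ₀)⁻¹) volume ρ₀ a := by
    rw [intervalIntegrable_iff_integrableOn_Ioc_of_le ha.le,
      integrableOn_Ioc_iff_integrableOn_Ioo]
    exact hg
  rw [intervalIntegrable_sub_inv_iff] at hii
  rcases hii with h1 | h1
  · exact ha.ne h1
  · exact h1 left_mem_uIcc
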